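/- Let P = cl(⋃_k P_k) ⊆ ℝⁿ where each P_k is finite with #P_k ≤ C·δ_k^{-1}, δ_k = 2^{-2^{k²}}, and P_{k+1} is contained in the 2δ_k-neighbourhood of P_{k-1} for all k ≥ 1. Then the Hausdorff dimension of P is 0. -/

import Mathlib

open Metric Set Filter Topology MeasureTheory ENNReal NNReal

/-- The rapidly decreasing sequence `δ_k = 2^{-2^{k²}}`. -/
noncomputable def deltaSeq (k : ℕ) : ℝ := 1 / 2 ^ (2 ^ (k ^ 2))

lemma deltaSeq_pos (k : ℕ) : 0 < deltaSeq k := by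
  unfold deltaSeq; positivity

lemma two_mul_deltaSeq_le (k : ℕ) : 2 * deltaSeq (k + 1) ≤ deltaSeq k := by
  have h : 2 ^ (k ^ 2) + 1 ≤ 2 ^ ((k + 1) ^ 2) := by
    have hsq : (k + 1) ^ 2 = k ^ 2 + 2 * k + 1 := by ring
    calc 2 ^ (k ^ 2) + 1 ≤ 2 ^ (k ^ 2) + 2 ^ (k ^ 2) :=
          Nat.add_le_add_left Nat.one_le_two_pow _
      _ = 2 ^ (k ^ 2 + 1) := by ring
      _ ≤ 2 ^ ((k + 1) ^ 2) := Nat.pow_le_pow_right (by norm_num) (by omega)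
  have h2 : (2 : ℝ) ^ (2 ^ (k ^ 2) + 1) ≤ 2 ^ (2 ^ ((k + 1) ^ 2)) :=
    pow_le_pow_right₀ (by norm_num) h
  rw [deltaSeq, deltaSeq, mul_one_div, div_le_div_iff₀ (by positivity) (by positivity), one_mul]
  calc (2 : ℝ) * 2 ^ (2 ^ (k ^ 2)) = 2 ^ (2 ^ (k ^ 2) + 1) := by ring
    _ ≤ 2 ^ (2 ^ ((k + 1) ^ 2)) := h2

lemma deltaSeq_succ_le (k : ℕ) : deltaSeq (k + 1) ≤ deltaSeq k := by
  have := two_mul_deltaSeq_le k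
  have := deltaSeq_pos (k + 1)
  linarith

lemma deltaSeq_antitone : Antitone deltaSeq :=
  antitone_nat_of_succ_le deltaSeq_succ_le

lemma le_two_pow_sq (k : ℕ) : k ≤ 2 ^ (k ^ 2) := by
  have h1 : k ≤ k ^ 2 := by nlinarith
  calc k ≤ 2 ^ k := Nat.lt_two_pow_self.le
    _ ≤ 2 ^ (k ^ 2) := Nat.pow_le_pow_right (by norm_num) h1

lemma deltaSeq_le_geom (k : ℕ) : deltaSeq k ≤ (1 / 2 : ℝ) ^ k := by
  have h : (2 : ℝ) ^ k ≤ 2 ^ (2 ^ (k ^ 2)) :=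
    pow_le_pow_right₀ (by norm_num) (le_two_pow_sq k)
  rw [deltaSeq, div_pow, one_pow]
  exact one_div_le_one_div_of_le (by positivity) h

lemma sum_inv_deltaSeq_le (k : ℕ) :
    ∑ i ∈ Finset.range (k + 1), 1 / deltaSeq i ≤ 2 / deltaSeq k := by
  induction k with
  | zero =>
      simp only [zero_add, Finset.sum_range_one]
      have := deltaSeq_pos 0
      rw [div_le_div_iff₀ this this]
      nlinarith
  | succ k ih =>
      rw [Finset.sum_range_succ]
      have h1 : 2 / deltaSeq k ≤ 1 / deltaSeq (k + 1) := by
        rw [div_le_div_iff₀ (deltaSeq_pos k) (deltaSeq_pos (k + 1))]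
        nlinarith [two_mul_deltaSeq_le k]
      have : (1 : ℝ) / deltaSeq (k + 1) + 1 / deltaSeq (k + 1) = 2 / deltaSeq (k + 1) := by
        ring
      linarith

lemma ediam_closedBall_le {α : Type*} [PseudoMetricSpace α] (x : α) {r : ℝ} (hr : 0 ≤ r) :
    EMetric.diam (closedBall x r) ≤ ENNReal.ofReal (2 * r) := by
  apply EMetric.diam_le
  intro y hy z hz
  calc edist y z ≤ edist y x + edist x z := edist_triangle y x z
    _ ≤ ENNReal.ofReal r + ENNReal.ofReal r := by
        gcongr
        · rw [edist_dist]
          exact ENNReal.ofReal_le_ofReal (Metric.mem_closedBall.mp hy)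
        · rw [edist_dist, dist_comm]
          exact ENNReal.ofReal_le_ofReal (Metric.mem_closedBall.mp hz)
    _ = ENNReal.ofReal (2 * r) := by rw [← ENNReal.ofReal_add hr hr]; ring_nf

lemma chain_subset {α : Type*} [PseudoMetricSpace α] (P : ℕ → Set α)
    (hnb : ∀ k, 1 ≤ k → P (k + 1) ⊆ cthickening (2 * deltaSeq k) (P (k - 1))) :
    ∀ m k, 1 ≤ k → P (k + 1 + 2 * m) ⊆ cthickening (4 * deltaSeq k) (P (k - 1)) := by
  intro m
  induction m with
  | zero =>
      intro k hk
      have := (hnb k hk).trans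
        (cthickening_mono (by nlinarith [deltaSeq_pos k] : 2 * deltaSeq k ≤ 4 * deltaSeq k) _)
      simpa using this
  | succ m ih =>
      intro k hk
      have hidx : k + 1 + 2 * (m + 1) = (k + 2) + 1 + 2 * m := by ring
      rw [hidx]
      have h1 : P ((k + 2) + 1 + 2 * m) ⊆ cthickening (4 * deltaSeq (k + 2)) (P (k + 1)) := by
        simpa using ih (k + 2) (by omega)
      refine h1.trans ?_
      have h2 : cthickening (4 * deltaSeq (k + 2)) (P (k + 1)) ⊆
          cthickening (4 * deltaSeq (k + 2)) (cthickening (2 * deltaSeq k) (P (k - 1))) :=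
        cthickening_subset_of_subset _ (hnb k hk)
      refine h2.trans ?_
      refine (cthickening_cthickening_subset
        (mul_nonneg (by norm_num) (deltaSeq_pos _).le)
        (mul_nonneg (by norm_num) (deltaSeq_pos _).le) _).trans (cthickening_mono ?_ _)
      nlinarith [two_mul_deltaSeq_le k, two_mul_deltaSeq_le (k + 1), deltaSeq_pos (k + 2),
        deltaSeq_pos (k + 1), deltaSeq_pos k]

lemma cover_subset {α : Type*} [PseudoMetricSpace α] (P : ℕ → Set α)
    (hnb : ∀ k, 1 ≤ k → P (k + 1) ⊆ cthickening (2 * deltaSeq k) (P (k - 1)))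
    (k : ℕ) (hk : 1 ≤ k) :
    (⋃ j, P j) ⊆ cthickening (4 * deltaSeq k) (⋃ i ∈ Finset.range k, P i) ∪
      cthickening (4 * deltaSeq (k + 1)) (P k) := by
  refine iUnion_subset fun j => ?_
  rcases lt_or_ge j k with hj | hj
  · exact ((subset_biUnion_of_mem (Finset.mem_range.mpr hj)).trans
      (self_subset_cthickening _)).trans subset_union_left
  · rcases eq_or_lt_of_le hj with rfl | hj'
    · exact (self_subset_cthickening _).trans subset_union_right
    · rcases Nat.even_or_odd (j - (k + 1)) with ⟨m, hm⟩ | ⟨m, hm⟩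
      · have hj2 : j = k + 1 + 2 * m := by omega
        subst hj2
        refine ((chain_subset P hnb m k hk).trans ?_).trans subset_union_left
        exact cthickening_subset_of_subset _
          (subset_biUnion_of_mem (Finset.mem_range.mpr (by omega)))
      · have hj2 : j = (k + 1) + 1 + 2 * m := by omega
        subst hj2
        have h := chain_subset P hnb m (k + 1) (by omega)
        simp only [Nat.add_sub_cancel] at h
        exact h.trans subset_union_right

lemma tendsto_inv_mul_rpow {d : ℝ} (hd : 0 < d) :
    Tendsto (fun k : ℕ => (1 / deltaSeq k) * (deltaSeq (k + 1)) ^ d) atTop (𝓝 0) := by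
  obtain ⟨N, hN⟩ := pow_unbounded_of_one_lt (R := ℝ) (2 / d) one_lt_two
  refine squeeze_zero' (Eventually.of_forall fun k =>
      mul_nonneg (one_div_nonneg.mpr (deltaSeq_pos k).le)
        (Real.rpow_nonneg (deltaSeq_pos (k + 1)).le d)) ?_
    (tendsto_pow_atTop_nhds_zero_of_lt_one (by norm_num) (by norm_num : (1:ℝ)/2 < 1))
  filter_upwards [eventually_ge_atTop N] with k hk
  have h2 : (2 : ℝ) ≤ d * 2 ^ (2 * k + 1) := by
    have h1 : (2 : ℝ) / d < 2 ^ N := hN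
    have h3 : (2 : ℝ) ^ N ≤ 2 ^ (2 * k + 1) :=
      pow_le_pow_right₀ one_le_two (by omega)
    rw [div_lt_iff₀ hd] at h1
    nlinarith
  set a : ℕ := 2 ^ (k ^ 2) with ha
  have hb : 2 ^ ((k + 1) ^ 2) = a * 2 ^ (2 * k + 1) := by
    rw [ha, ← pow_add]
    congr 1
    ring
  have hdk : 1 / deltaSeq k = (2 : ℝ) ^ ((a : ℕ) : ℝ) := by
    rw [deltaSeq, one_div_one_div, Real.rpow_natCast]
  have hdk1 : deltaSeq (k + 1) = (2 : ℝ) ^ (-(((a * 2 ^ (2 * k + 1) : ℕ)) : ℝ)) := by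
    rw [deltaSeq, hb, Real.rpow_neg (by norm_num), Real.rpow_natCast, one_div]
  have hhalf : ((1 : ℝ) / 2) ^ k = (2 : ℝ) ^ (-(k : ℝ)) := by
    rw [Real.rpow_neg (by norm_num), Real.rpow_natCast, one_div, inv_pow]
  rw [hdk, hdk1, hhalf, ← Real.rpow_mul (by norm_num : (0:ℝ) ≤ 2),
    ← Real.rpow_add (by norm_num : (0:ℝ) < 2)]
  apply (Real.rpow_le_rpow_left_iff one_lt_two).mpr
  have hak : (k : ℝ) ≤ (a : ℝ) := by exact_mod_cast le_two_pow_sq k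
  have hA0 : (0 : ℝ) ≤ (a : ℝ) := Nat.cast_nonneg a
  push_cast
  nlinarith [mul_nonneg hA0 (sub_nonneg.mpr h2)]

lemma tendsto_term {d : ℝ} (hd : 0 < d) (A : ℝ) :
    Tendsto (fun k : ℕ => A / deltaSeq k * (8 * deltaSeq (k + 1)) ^ d) atTop (𝓝 0) := by
  have h := (tendsto_inv_mul_rpow hd).const_mul (A * (8 : ℝ) ^ d)
  rw [mul_zero] at h
  refine h.congr fun k => ?_
  rw [Real.mul_rpow (by norm_num) (deltaSeq_pos (k + 1)).le]
  ring

lemma ncard_biUnion_range_le {α : Type*} (P : ℕ → Set α) (hfin : ∀ k, (P k).Finite) (m : ℕ) :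
    (⋃ i ∈ Finset.range m, P i).ncard ≤ ∑ i ∈ Finset.range m, (P i).ncard := by
  induction m with
  | zero => simp
  | succ m ih =>
      rw [Finset.range_add_one, Finset.set_biUnion_insert, Finset.sum_insert (by simp)]
      calc (P m ∪ ⋃ i ∈ Finset.range m, P i).ncard
          ≤ (P m).ncard + (⋃ i ∈ Finset.range m, P i).ncard := Set.ncard_union_le _ _
        _ ≤ _ := by omega

lemma key_measure (n : ℕ) (C : ℝ) (P : ℕ → Set (EuclideanSpace ℝ (Fin n)))
    (hfin : ∀ k, (P k).Finite)
    (hcard : ∀ k, ((P k).ncard : ℝ) ≤ C / deltaSeq k)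
    (hnb : ∀ k, 1 ≤ k → P (k + 1) ⊆ Metric.cthickening (2 * deltaSeq k) (P (k - 1)))
    {d : ℝ} (hd : 0 < d) :
    μH[d] (closure (⋃ k, P k)) = 0 := by
  classical
  have hC : 0 ≤ C := by
    by_contra h
    push_neg at h
    have h1 : C / deltaSeq 0 < 0 := div_neg_of_neg_of_pos h (deltaSeq_pos 0)
    have h2 := hcard 0
    have h3 : (0 : ℝ) ≤ ((P 0).ncard : ℝ) := Nat.cast_nonneg _
    linarith
  set U : ℕ → Set (EuclideanSpace ℝ (Fin n)) := fun k => ⋃ i ∈ Finset.range (k + 1), P i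
    with hUdef
  have hUfin : ∀ k, (U k).Finite := fun k =>
    Set.Finite.biUnion (Finset.range (k + 1)).finite_toSet fun i _ => hfin i
  haveI instU : ∀ k, Fintype (U k) := fun k => (hUfin k).fintype
  haveI instP : ∀ k, Fintype (P (k + 1)) := fun k => (hfin (k + 1)).fintype
  -- cardinality bounds (real valued)
  have hUcard : ∀ k, ((Fintype.card (U k) : ℝ)) ≤ 2 * C / deltaSeq k := by
    intro k
    have h1 : (U k).ncard = Fintype.card (U k) := by
      rw [Set.ncard_eq_toFinset_card', Set.toFinset_card]
    have h2 : ((U k).ncard : ℝ) ≤ ∑ i ∈ Finset.range (k + 1), ((P i).ncard : ℝ) := by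
      have := ncard_biUnion_range_le P hfin (k + 1)
      exact_mod_cast this
    have h3 : ∑ i ∈ Finset.range (k + 1), ((P i).ncard : ℝ) ≤
        ∑ i ∈ Finset.range (k + 1), C / deltaSeq i :=
      Finset.sum_le_sum fun i _ => hcard i
    have h4 : ∑ i ∈ Finset.range (k + 1), C / deltaSeq i =
        C * ∑ i ∈ Finset.range (k + 1), 1 / deltaSeq i := by
      rw [Finset.mul_sum]
      exact Finset.sum_congr rfl fun i _ => by ring
    have h5 : C * ∑ i ∈ Finset.range (k + 1), 1 / deltaSeq i ≤ C * (2 / deltaSeq k) :=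
      mul_le_mul_of_nonneg_left (sum_inv_deltaSeq_le k) hC
    have : C * (2 / deltaSeq k) = 2 * C / deltaSeq k := by ring
    rw [← h1]
    linarith
  have hPcard : ∀ k, ((Fintype.card (P (k + 1)) : ℝ)) ≤ C / deltaSeq (k + 1) := by
    intro k
    have h1 : (P (k + 1)).ncard = Fintype.card (P (k + 1)) := by
      rw [Set.ncard_eq_toFinset_card', Set.toFinset_card]
    rw [← h1]
    exact hcard (k + 1)
  -- the covering families
  set t : ∀ k : ℕ, (↥(U k) ⊕ ↥(P (k + 1))) → Set (EuclideanSpace ℝ (Fin n)) := fun k i =>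
    Sum.elim (fun x : ↥(U k) => closedBall (x : EuclideanSpace ℝ (Fin n)) (4 * deltaSeq (k + 1)))
      (fun x : ↥(P (k + 1)) =>
        closedBall (x : EuclideanSpace ℝ (Fin n)) (4 * deltaSeq (k + 2))) i with htdef
  set r : ℕ → ℝ≥0∞ := fun k => ENNReal.ofReal (8 * deltaSeq (k + 1)) with hrdef
  have hr : Tendsto r atTop (𝓝 0) := by
    have hgeo : Tendsto (fun k : ℕ => 8 * (1 / 2 : ℝ) ^ k) atTop (𝓝 0) := by
      have := (tendsto_pow_atTop_nhds_zero_of_lt_one (by norm_num : (0:ℝ) ≤ 1/2)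
        (by norm_num : (1:ℝ)/2 < 1)).const_mul (8 : ℝ)
      simpa using this
    have hreal : Tendsto (fun k : ℕ => 8 * deltaSeq (k + 1)) atTop (𝓝 0) := by
      refine squeeze_zero' (Eventually.of_forall fun k => by nlinarith [deltaSeq_pos (k + 1)])
        (Eventually.of_forall fun k => ?_) hgeo
      have hps : ((1:ℝ)/2) ^ (k+1) = (1/2) ^ k * (1/2) := pow_succ _ _
      nlinarith [deltaSeq_le_geom (k+1), pow_nonneg (by norm_num : (0:ℝ) ≤ 1/2) k]
    rw [hrdef]
    have := ENNReal.tendsto_ofReal hreal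
    rwa [ENNReal.ofReal_zero] at this
  have ht : ∀ᶠ k in atTop, ∀ i, EMetric.diam (t k i) ≤ r k := by
    refine Eventually.of_forall fun k i => ?_
    rcases i with x | x
    · simp only [htdef, Sum.elim_inl]
      refine (ediam_closedBall_le _ (by nlinarith [deltaSeq_pos (k + 1)])).trans ?_
      exact ENNReal.ofReal_le_ofReal (by linarith)
    · simp only [htdef, Sum.elim_inr]
      refine (ediam_closedBall_le _ (by nlinarith [deltaSeq_pos (k + 2)])).trans ?_
      exact ENNReal.ofReal_le_ofReal (by nlinarith [deltaSeq_succ_le (k + 1)])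
  have hst : ∀ᶠ k in atTop, closure (⋃ j, P j) ⊆ ⋃ i, t k i := by
    refine Eventually.of_forall fun k => ?_
    have hcov := cover_subset P hnb (k + 1) (by omega)
    have hclosed : IsClosed (cthickening (4 * deltaSeq (k + 1)) (U k) ∪
        cthickening (4 * deltaSeq (k + 2)) (P (k + 1))) :=
      isClosed_cthickening.union isClosed_cthickening
    have hsub : closure (⋃ j, P j) ⊆ cthickening (4 * deltaSeq (k + 1)) (U k) ∪
        cthickening (4 * deltaSeq (k + 2)) (P (k + 1)) := closure_minimal hcov hclosed
    refine hsub.trans ?_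
    rintro x (hx | hx)
    · rw [IsCompact.cthickening_eq_biUnion_closedBall (hUfin k).isCompact
        (by nlinarith [deltaSeq_pos (k + 1)])] at hx
      simp only [mem_iUnion] at hx
      obtain ⟨y, hy, hball⟩ := hx
      exact mem_iUnion.mpr ⟨Sum.inl ⟨y, hy⟩, hball⟩
    · rw [IsCompact.cthickening_eq_biUnion_closedBall (hfin (k + 1)).isCompact
        (by nlinarith [deltaSeq_pos (k + 2)])] at hx
      simp only [mem_iUnion] at hx
      obtain ⟨y, hy, hball⟩ := hx
      exact mem_iUnion.mpr ⟨Sum.inr ⟨y, hy⟩, hball⟩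
  have hμ := MeasureTheory.Measure.hausdorffMeasure_le_liminf_sum d (closure (⋃ k, P k)) r hr t ht hst
  set b : ℕ → ℝ := fun k => 2 * C / deltaSeq k * (8 * deltaSeq (k + 1)) ^ d +
    C / deltaSeq (k + 1) * (8 * deltaSeq (k + 2)) ^ d with hbdef
  have hble : ∀ k, (∑ i, EMetric.diam (t k i) ^ d) ≤ ENNReal.ofReal (b k) := by
    intro k
    have hpos1 : (0:ℝ) < 8 * deltaSeq (k + 1) := by nlinarith [deltaSeq_pos (k + 1)]
    have hpos2 : (0:ℝ) < 8 * deltaSeq (k + 2) := by nlinarith [deltaSeq_pos (k + 2)]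
    have hnn1 : (0:ℝ) ≤ 2 * C / deltaSeq k := div_nonneg (by linarith) (deltaSeq_pos k).le
    have hnn2 : (0:ℝ) ≤ C / deltaSeq (k + 1) := div_nonneg hC (deltaSeq_pos (k + 1)).le
    rw [Fintype.sum_sum_type]
    have hpart1 : (∑ x : ↥(U k), EMetric.diam (t k (Sum.inl x)) ^ d) ≤
        ENNReal.ofReal (2 * C / deltaSeq k * (8 * deltaSeq (k + 1)) ^ d) := by
      have hterm : ∀ x : ↥(U k), EMetric.diam (t k (Sum.inl x)) ^ d ≤
          ENNReal.ofReal ((8 * deltaSeq (k + 1)) ^ d) := by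
        intro x
        rw [← ENNReal.ofReal_rpow_of_pos hpos1]
        refine ENNReal.rpow_le_rpow ?_ hd.le
        simp only [htdef, Sum.elim_inl]
        refine (ediam_closedBall_le _ (by nlinarith [deltaSeq_pos (k + 1)])).trans ?_
        exact ENNReal.ofReal_le_ofReal (by linarith)
      calc (∑ x : ↥(U k), EMetric.diam (t k (Sum.inl x)) ^ d)
          ≤ ∑ _x : ↥(U k), ENNReal.ofReal ((8 * deltaSeq (k + 1)) ^ d) :=
            Finset.sum_le_sum fun x _ => hterm x
        _ = (Fintype.card (U k) : ℝ≥0∞) * ENNReal.ofReal ((8 * deltaSeq (k + 1)) ^ d) := by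
            rw [Finset.sum_const, Finset.card_univ, nsmul_eq_mul]
        _ ≤ ENNReal.ofReal (2 * C / deltaSeq k) * ENNReal.ofReal ((8 * deltaSeq (k + 1)) ^ d) := by
            refine mul_le_mul_left ?_ _
            rw [← ENNReal.ofReal_natCast]
            exact ENNReal.ofReal_le_ofReal (hUcard k)
        _ = ENNReal.ofReal (2 * C / deltaSeq k * (8 * deltaSeq (k + 1)) ^ d) :=
            (ENNReal.ofReal_mul hnn1).symm
    have hpart2 : (∑ x : ↥(P (k + 1)), EMetric.diam (t k (Sum.inr x)) ^ d) ≤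
        ENNReal.ofReal (C / deltaSeq (k + 1) * (8 * deltaSeq (k + 2)) ^ d) := by
      have hterm : ∀ x : ↥(P (k + 1)), EMetric.diam (t k (Sum.inr x)) ^ d ≤
          ENNReal.ofReal ((8 * deltaSeq (k + 2)) ^ d) := by
        intro x
        rw [← ENNReal.ofReal_rpow_of_pos hpos2]
        refine ENNReal.rpow_le_rpow ?_ hd.le
        simp only [htdef, Sum.elim_inr]
        refine (ediam_closedBall_le _ (by nlinarith [deltaSeq_pos (k + 2)])).trans ?_
        exact ENNReal.ofReal_le_ofReal (by linarith)
      calc (∑ x : ↥(P (k + 1)), EMetric.diam (t k (Sum.inr x)) ^ d)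
          ≤ ∑ _x : ↥(P (k + 1)), ENNReal.ofReal ((8 * deltaSeq (k + 2)) ^ d) :=
            Finset.sum_le_sum fun x _ => hterm x
        _ = (Fintype.card (P (k + 1)) : ℝ≥0∞) * ENNReal.ofReal ((8 * deltaSeq (k + 2)) ^ d) := by
            rw [Finset.sum_const, Finset.card_univ, nsmul_eq_mul]
        _ ≤ ENNReal.ofReal (C / deltaSeq (k + 1)) *
              ENNReal.ofReal ((8 * deltaSeq (k + 2)) ^ d) := by
            refine mul_le_mul_left ?_ _
            rw [← ENNReal.ofReal_natCast]
            exact ENNReal.ofReal_le_ofReal (hPcard k)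
        _ = ENNReal.ofReal (C / deltaSeq (k + 1) * (8 * deltaSeq (k + 2)) ^ d) :=
            (ENNReal.ofReal_mul hnn2).symm
    calc (∑ x : ↥(U k), EMetric.diam (t k (Sum.inl x)) ^ d) +
          (∑ x : ↥(P (k + 1)), EMetric.diam (t k (Sum.inr x)) ^ d)
        ≤ ENNReal.ofReal (2 * C / deltaSeq k * (8 * deltaSeq (k + 1)) ^ d) +
          ENNReal.ofReal (C / deltaSeq (k + 1) * (8 * deltaSeq (k + 2)) ^ d) :=
          add_le_add hpart1 hpart2
      _ = ENNReal.ofReal (b k) := by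
          rw [← ENNReal.ofReal_add (mul_nonneg hnn1 (Real.rpow_nonneg hpos1.le d))
            (mul_nonneg hnn2 (Real.rpow_nonneg hpos2.le d))]
  have hbtend : Tendsto (fun k => ENNReal.ofReal (b k)) atTop (𝓝 0) := by
    have h1 := tendsto_term hd (2 * C)
    have h2 := (tendsto_term hd C).comp (tendsto_add_atTop_nat 1)
    have h3 := h1.add h2
    rw [add_zero] at h3
    have hb0 : Tendsto b atTop (𝓝 0) := h3.congr fun k => rfl
    have h0 := ENNReal.tendsto_ofReal hb0
    rwa [ENNReal.ofReal_zero] at h0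
  have hliminf : liminf (fun k => ∑ i, EMetric.diam (t k i) ^ d) atTop ≤ 0 := by
    calc liminf (fun k => ∑ i, EMetric.diam (t k i) ^ d) atTop
        ≤ liminf (fun k => ENNReal.ofReal (b k)) atTop :=
          liminf_le_liminf (Eventually.of_forall hble)
      _ = 0 := hbtend.liminf_eq
  exact le_antisymm (hμ.trans hliminf) zero_le

theorem dimH_zero_of_rapid_construction (n : ℕ) (C : ℝ)
    (P : ℕ → Set (EuclideanSpace ℝ (Fin n)))
    (hfin : ∀ k, (P k).Finite)
    (hcard : ∀ k, ((P k).ncard : ℝ) ≤ C / deltaSeq k)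
    (hnb : ∀ k, 1 ≤ k → P (k + 1) ⊆ Metric.cthickening (2 * deltaSeq k) (P (k - 1))) :
    dimH (closure (⋃ k, P k)) = 0 := by
  refine le_antisymm ?_ zero_le
  refine dimH_le fun d' hd' => ?_
  by_contra h
  have hne : d' ≠ 0 := by
    intro h0
    exact h (by simp [h0])
  have hpos : 0 < (d' : ℝ) := by
    exact_mod_cast hne.bot_lt
  have hzero := key_measure n C P hfin hcard hnb hpos
  rw [hd'] at hzero
  exact ENNReal.top_ne_zero hzero
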